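/- For any η > 0 and C ≥ 0 there exists c₀ = c₀(η, C) ∈ ℕ such that: for all n, l, k, d ≥ 0 with n ≥ (1+η)l + k + c₀ and l ≥ k + c₀ − 1, if A ⊆ binom([n],l) and B ⊆ binom([n],k) are cross-intersecting and |A| ≤ binom(n,l) − binom(n−d,l), then |A| + C|B| ≤ binom(n,l) − binom(n−d,l) + C·binom(n−d, k−d). -/

import Mathlib

open Finset

open Colex

namespace CrossInt



lemma choose_step_nat (p j : ℕ) (h : 2*j+1 ≤ p) : p.choose j ≤ p.choose (j+1) := by
  have key := Nat.choose_succ_right_eq p j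
  have h1 : p.choose j * (j+1) ≤ p.choose j * (p - j) :=
    Nat.mul_le_mul_left _ (by omega)
  rw [← key] at h1
  exact Nat.le_of_mul_le_mul_right h1 (by omega)

lemma choose_le_half (p : ℕ) : ∀ j i, i ≤ j → 2*j ≤ p → p.choose i ≤ p.choose j := by
  intro j
  induction j with
  | zero => intro i h _; simp [Nat.le_zero.mp h]
  | succ j ih =>
    intro i hij hp
    rcases Nat.eq_or_lt_of_le hij with rfl | hlt
    · exact le_rfl
    · exact (ih i (by omega) (by omega)).trans (choose_step_nat p j (by omega))

lemma choose_mono_middle (p i j : ℕ) (hij : i ≤ j) (hjp : i + j ≤ p) :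
    p.choose i ≤ p.choose j := by
  by_cases h2 : 2*j ≤ p
  · exact choose_le_half p j i hij h2
  · have hj : j ≤ p := by omega
    rw [← Nat.choose_symm hj]
    exact choose_le_half p (p - j) i (by omega) (by omega)

lemma choose_ratio_ge {η : ℝ} (p j : ℕ) (h : (1+η)*(j+1) ≤ (p:ℝ) - j) (hη : 0 ≤ η) :
    (1+η) * p.choose j ≤ (p.choose (j+1) : ℝ) := by
  have hjp : j < p := by
    by_contra hc
    push_neg at hc
    have : (p:ℝ) ≤ j := by exact_mod_cast hc
    nlinarith [Nat.cast_nonneg (α := ℝ) j]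
  have key : (p.choose (j+1) : ℝ) * (j+1) = p.choose j * ((p:ℝ) - j) := by
    have := Nat.choose_succ_right_eq p j
    have hc : ((p - j : ℕ) : ℝ) = (p:ℝ) - j := by
      rw [Nat.cast_sub hjp.le]
    calc (p.choose (j+1) : ℝ) * (j+1) = ((p.choose (j+1) * (j+1) : ℕ) : ℝ) := by push_cast; ring
    _ = ((p.choose j * (p - j) : ℕ) : ℝ) := by rw [this]
    _ = p.choose j * ((p:ℝ) - j) := by push_cast [Nat.cast_sub hjp.le]; ring
  have h1 : (1+η) * p.choose j * (j+1) ≤ (p.choose j : ℝ) * ((p:ℝ) - j) := by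
    have := mul_le_mul_of_nonneg_left h (Nat.cast_nonneg (α := ℝ) (p.choose j))
    nlinarith [Nat.cast_nonneg (α := ℝ) (p.choose j)]
  rw [← key] at h1
  have hj1 : (0:ℝ) < (j:ℝ)+1 := by positivity
  nlinarith

lemma choose_geom {η : ℝ} (hη : 0 < η) :
    ∀ (s a l p : ℕ), a + s ≤ l → (1+η)*l + (a+s) ≤ (p:ℝ) →
      (1+η)^s * p.choose a ≤ (p.choose (a+s) : ℝ) := by
  intro s
  induction s with
  | zero => intro a l p _ _; simp
  | succ s ih =>
    intro a l p hal hp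
    have hcast : ((a:ℝ) + s + 1) ≤ (l:ℝ) := by exact_mod_cast hal
    have hp' : (1+η)*l + (a+s) ≤ (p:ℝ) := by push_cast at hp ⊢; linarith
    have h1 := ih a l p (by omega) hp'
    have hstep : (1+η) * p.choose (a+s) ≤ (p.choose (a+s+1) : ℝ) := by
      apply choose_ratio_ge p (a+s) _ hη.le
      push_cast at hp ⊢
      nlinarith
    have h2 : (1+η)^(s+1) * p.choose a = (1+η) * ((1+η)^s * p.choose a) := by ring
    rw [h2, show a + (s+1) = (a+s)+1 by omega]
    calc (1+η) * ((1+η)^s * p.choose a) ≤ (1+η) * p.choose (a+s) := by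
          apply mul_le_mul_of_nonneg_left h1 (by linarith)
    _ ≤ (p.choose ((a+s)+1) : ℝ) := hstep

lemma claimN {η C : ℝ} {N : ℕ} (hη : 0 < η) (hC : 0 ≤ C) (hN : C ≤ (1+η)^N)
    (a l p : ℕ) (hal : a + N + 3 ≤ l) (hp : (1+η)*l + (a + N + 3) ≤ (p:ℝ)) :
    C * p.choose a ≤ (p.choose (l-1) : ℝ) := by
  have h1 : (1+η)^N * p.choose a ≤ (p.choose (a+N):ℝ) := by
    apply choose_geom hη N a l p (by omega)
    push_cast at hp ⊢; linarith
  have hpl : (l:ℝ) + a + N + 3 ≤ (p:ℝ) := by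
    have : (l:ℝ) ≤ (1+η)*l := by nlinarith [Nat.cast_nonneg (α := ℝ) l]
    push_cast at hp ⊢; linarith
  have hpl' : l + a + N + 3 ≤ p := by exact_mod_cast hpl
  have h2 : p.choose (a+N) ≤ p.choose (l-1) :=
    choose_mono_middle p (a+N) (l-1) (by omega) (by omega)
  calc C * p.choose a ≤ (1+η)^N * p.choose a :=
        mul_le_mul_of_nonneg_right hN (Nat.cast_nonneg _)
  _ ≤ (p.choose (a+N):ℝ) := h1
  _ ≤ (p.choose (l-1) : ℝ) := by exact_mod_cast h2

lemma telescope {C : ℝ} (hC : 0 ≤ C) (l m q₀ : ℕ) (hl : 1 ≤ l) (hm : 1 ≤ m) :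
    ∀ j : ℕ, (∀ q, q₀ ≤ q → q < q₀ + j → C * (q.choose (m-1) : ℝ) ≤ (q.choose (l-1) : ℝ)) →
    C * (((q₀+j).choose m : ℝ) - (q₀.choose m : ℝ)) ≤ ((q₀+j).choose l : ℝ) - q₀.choose l := by
  intro j
  induction j with
  | zero => intro _; simp
  | succ j ih =>
    intro hstep
    have ih' := ih (fun q hq hq' => hstep q hq (by omega))
    have hs := hstep (q₀+j) (by omega) (by omega)
    obtain ⟨m', rfl⟩ : ∃ m', m = m' + 1 := ⟨m-1, by omega⟩
    obtain ⟨l', rfl⟩ : ∃ l', l = l' + 1 := ⟨l-1, by omega⟩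
    have pm : ((q₀+j+1).choose (m'+1) : ℝ) = (q₀+j).choose m' + (q₀+j).choose (m'+1) := by
      rw [show q₀+j+1 = (q₀+j)+1 by omega, Nat.choose_succ_succ']
      push_cast; ring
    have pl : ((q₀+j+1).choose (l'+1) : ℝ) = (q₀+j).choose l' + (q₀+j).choose (l'+1) := by
      rw [show q₀+j+1 = (q₀+j)+1 by omega, Nat.choose_succ_succ']
      push_cast; ring
    simp only [Nat.add_sub_cancel] at hs
    rw [show q₀ + (j+1) = q₀ + j + 1 by omega, pm, pl]
    linarith



lemma exists_lowerset {X : Type*} [LinearOrder X] (S : Finset X) :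
    ∀ b, b ≤ #S → ∃ T, T ⊆ S ∧ #T = b ∧ ∀ x ∈ T, ∀ y ∈ S, y ≤ x → y ∈ T := by
  classical
  intro b
  induction b with
  | zero => intro _; exact ⟨∅, empty_subset _, card_empty, by simp⟩
  | succ b ih =>
    intro hb
    obtain ⟨T, hTS, hTcard, hTlow⟩ := ih (by omega)
    have hne : (S \ T).Nonempty := by
      rw [← card_pos, card_sdiff_of_subset hTS]; omega
    set z := (S \ T).min' hne with hz
    have hzS : z ∈ S := (mem_sdiff.1 ((S \ T).min'_mem hne)).1
    have hzT : z ∉ T := (mem_sdiff.1 ((S \ T).min'_mem hne)).2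
    refine ⟨insert z T, insert_subset hzS hTS, by rw [card_insert_of_notMem hzT, hTcard], ?_⟩
    intro x hx y hyS hyx
    rcases mem_insert.1 hx with rfl | hxT
    · by_cases hyT : y ∈ T
      · exact mem_insert_of_mem hyT
      · have h1 : z ≤ y := min'_le _ _ (mem_sdiff.2 ⟨hyS, hyT⟩)
        have : y = z := le_antisymm hyx h1
        rw [this]; exact mem_insert_self _ _
    · exact mem_insert_of_mem (hTlow x hxT y hyS hyx)

lemma exists_isInitSeg (n r b : ℕ) (hb : b ≤ n.choose r) :
    ∃ 𝒞 : Finset (Finset (Fin n)), IsInitSeg 𝒞 r ∧ #𝒞 = b := by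
  classical
  set S : Finset (Colex (Finset (Fin n))) := (powersetCard r (univ : Finset (Fin n))).image toColex with hS
  have hinj : Function.Injective (toColex : Finset (Fin n) → Colex (Finset (Fin n))) :=
    fun a b h => toColex_inj.1 h
  have hScard : #S = n.choose r := by
    rw [hS, card_image_of_injective _ hinj, card_powersetCard, card_univ, Fintype.card_fin]
  obtain ⟨T, hTS, hTcard, hTlow⟩ := exists_lowerset S b (by omega)
  refine ⟨(powersetCard r (univ : Finset (Fin n))).filter (fun s => toColex s ∈ T), ⟨?_, ?_⟩, ?_⟩
  · intro s hs
    simp only [coe_filter, Set.mem_setOf_eq] at hs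
    exact (mem_powersetCard.1 hs.1).2
  · intro s t hs ht
    rw [mem_filter] at hs ⊢
    refine ⟨mem_powersetCard.2 ⟨subset_univ _, ht.2⟩, ?_⟩
    refine hTlow (toColex s) hs.2 (toColex t) ?_ ht.1.le
    rw [hS, mem_image]
    exact ⟨t, mem_powersetCard.2 ⟨subset_univ _, ht.2⟩, rfl⟩
  · have himg : ((powersetCard r (univ : Finset (Fin n))).filter
        (fun s => toColex s ∈ T)).image toColex = T := by
      ext c
      simp only [mem_image, mem_filter]
      constructor
      · rintro ⟨s, ⟨_, hsT⟩, rfl⟩; exact hsT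
      · intro hc
        obtain ⟨s, hs, rfl⟩ := by
          have := hTS hc
          rw [hS, mem_image] at this
          exact this
        exact ⟨s, ⟨hs, hc⟩, rfl⟩
    have h2 := card_image_of_injective ((powersetCard r (univ : Finset (Fin n))).filter
        (fun s => toColex s ∈ T)) hinj
    rw [himg, hTcard] at h2
    exact h2.symm

lemma isInitSeg_cube {n : ℕ} (p r : ℕ) (hpn : p ≤ n) :
    IsInitSeg (powersetCard r (attachFin (range p)
      (fun m hm => (mem_range.1 hm).trans_le hpn))) r := by
  constructor
  · exact Set.sized_powersetCard _ _
  · simp_rw [mem_powersetCard]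
    rintro A B hA ⟨HB₁, HB₂⟩
    refine ⟨fun t ht => ?_, HB₂⟩
    rw [mem_attachFin, mem_range]
    have : toColex (image Fin.val B) < toColex (image Fin.val A) := by
      rwa [toColex_image_lt_toColex_image Fin.val_strictMono]
    apply Colex.forall_lt_mono this.le _ t (mem_image.2 ⟨t, ht, rfl⟩)
    simp_rw [mem_image]
    rintro _ ⟨a, ha, hab⟩
    have := hA.1 ha
    rw [mem_attachFin, mem_range] at this
    omega

lemma lym_iter {n : ℕ} (G : Finset (Finset (Fin n))) (r : ℕ)
    (hG : (G : Set (Finset (Fin n))).Sized r) :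
    ∀ i, i ≤ r → (#G : ℝ) / n.choose r ≤ (#(shadow^[i] G) : ℝ) / n.choose (r - i) := by
  intro i
  induction i with
  | zero => intro _; simp
  | succ i ih =>
    intro hi
    have h1 := ih (by omega)
    have hsz : ((shadow^[i] G : Finset (Finset (Fin n))) : Set (Finset (Fin n))).Sized (r - i) :=
      hG.shadow_iterate
    have h2 := card_div_choose_le_card_shadow_div_choose (𝕜 := ℝ) (r := r - i)
      (by omega : r - i ≠ 0) hsz
    rw [Fintype.card_fin] at h2
    rw [Function.iterate_succ_apply']
    have : r - i - 1 = r - (i+1) := by omega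
    rw [this] at h2
    exact h1.trans h2


end CrossInt

open CrossInt
set_option maxHeartbeats 1000000

/-- For any η > 0 and C ≥ 0 there exists c₀ such that for cross-intersecting A, B
with n ≥ (1+η)l + k + c₀, l ≥ k + c₀ − 1 and |A| ≤ binom(n,l) − binom(n−d,l),
we have |A| + C|B| ≤ binom(n,l) − binom(n−d,l) + C·binom(n−d,k−d)
(where binom(n−d,k−d) is interpreted as 0 when k < d). -/
theorem cross_intersecting_weighted_bound (η C : ℝ) (hη : 0 < η) (hC : 0 ≤ C) :
    ∃ c₀ : ℕ, ∀ (n l k d : ℕ) (A B : Finset (Finset (Fin n))),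
      (1 + η) * l + k + c₀ ≤ (n : ℝ) → k + c₀ ≤ l + 1 →
      (∀ S ∈ A, S.card = l) → (∀ S ∈ B, S.card = k) →
      (∀ S ∈ A, ∀ T ∈ B, (S ∩ T).Nonempty) →
      A.card ≤ n.choose l - (n - d).choose l →
      (A.card : ℝ) + C * B.card ≤
        (n.choose l : ℝ) - (n - d).choose l +
          C * (if d ≤ k then ((n - d).choose (k - d) : ℝ) else 0) := by
  obtain ⟨N, hN⟩ := pow_unbounded_of_one_lt (max 1 C) (by linarith : (1:ℝ) < 1 + η)
  refine ⟨N + 5, ?_⟩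
  intro n l k d A B hn hkl hA hB hcross hAcard
  have hCN : C ≤ (1+η)^N := (le_max_right 1 C).trans hN.le
  have hnR : (1+η)*l + k + (N+5) ≤ (n:ℝ) := by push_cast at hn ⊢; linarith
  have hlge : (l:ℝ) ≤ (1+η)*l := by nlinarith [Nat.cast_nonneg (α := ℝ) l]
  have hnlk : l + k + (N+5) ≤ n := by
    have : (l:ℝ) + k + (N+5) ≤ (n:ℝ) := by linarith
    exact_mod_cast this
  have hklN : k + (N+5) ≤ l + 1 := hkl
  have hlN : N + 4 ≤ l := by omega
  set m := n - k with hm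
  have hlm5 : l + N + 5 ≤ m := by omega
  have hlm : l ≤ m := by omega
  have hmn : m ≤ n := by omega
  have hml : m - (m - l) = l := by omega
  have hchoosele : (n-d).choose l ≤ n.choose l := Nat.choose_le_choose l (Nat.sub_le n d)
  have hAN : A.card + (n-d).choose l ≤ n.choose l := by omega
  have hAr : (A.card : ℝ) ≤ (n.choose l : ℝ) - ((n-d).choose l : ℝ) := by
    have : (A.card : ℝ) + ((n-d).choose l : ℝ) ≤ (n.choose l : ℝ) := by exact_mod_cast hAN
    linarith
  set fdN := (n-d).choose m with hfdN
  have hfd : (if d ≤ k then (((n-d)).choose (k-d) : ℝ) else 0) = (fdN : ℝ) := by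
    split_ifs with hdk
    · norm_cast
      rw [hfdN]
      have h1 : (n-d) - (k-d) = m := by omega
      rw [← h1]
      exact (Nat.choose_symm (by omega : k-d ≤ n-d)).symm
    · rw [hfdN]
      have : (n-d).choose m = 0 := Nat.choose_eq_zero_of_lt (by omega)
      rw [this]; simp
  rw [hfd]
  rcases eq_or_lt_of_le hC with hC0 | hCpos
  · rw [← hC0]; simp; linarith
  by_cases hbf : (B.card : ℝ) ≤ (fdN : ℝ)
  · have := mul_le_mul_of_nonneg_left hbf hC
    linarith
  push_neg at hbf
  have hbfN : fdN < B.card := by exact_mod_cast hbf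
  set b := B.card with hb
  have hBne : 1 ≤ b := by omega
  set F := B.compls with hF
  have hFcard : #F = b := card_compls B
  have hBsized : (B : Set (Finset (Fin n))).Sized k := fun S hS => hB S hS
  have hFsized : (F : Set (Finset (Fin n))).Sized m := by
    have h := hBsized.compls
    rw [Fintype.card_fin, ← hm] at h
    rw [hF]
    exact h
  have hdisj : Disjoint A (shadow^[m - l] F) := by
    rw [disjoint_left]
    intro S hSA hSsh
    rw [mem_shadow_iterate_iff_exists_sdiff] at hSsh
    obtain ⟨U, hUF, hSU, _⟩ := hSsh
    rw [hF, mem_compls] at hUF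
    obtain ⟨x, hx⟩ := hcross S hSA Uᶜ hUF
    rw [mem_inter] at hx
    exact (mem_compl.1 hx.2) (hSU hx.1)
  have hshadow_sized : ((shadow^[m-l] F : Finset (Finset (Fin n))) : Set (Finset (Fin n))).Sized l := by
    have := hFsized.shadow_iterate (k := m-l)
    rwa [hml] at this
  have hsum : A.card + #(shadow^[m-l] F) ≤ n.choose l := by
    have hsub : A ∪ shadow^[m-l] F ⊆ powersetCard l univ := by
      intro S hS
      rw [mem_powersetCard]
      refine ⟨subset_univ _, ?_⟩
      rcases mem_union.1 hS with h | h
      · exact hA S h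
      · exact hshadow_sized h
    have := card_le_card hsub
    rwa [card_union_of_disjoint hdisj, card_powersetCard, card_univ, Fintype.card_fin] at this
  have hbn : b ≤ n.choose m := by
    have hsub : B ⊆ powersetCard k univ := fun S hS => mem_powersetCard.2 ⟨subset_univ _, hB S hS⟩
    have h1 := card_le_card hsub
    rw [card_powersetCard, card_univ, Fintype.card_fin] at h1
    have h2 : n.choose m = n.choose k := by
      rw [hm]; exact Nat.choose_symm (by omega)
    omega
  have hfdb : (n-d).choose m ≤ b := by omega
  -- the maximal p with C(p,m) ≤ b
  obtain ⟨pstar, hp3, hp2, hp1, hq0, hpmax⟩ :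
      ∃ p, p ≤ n ∧ p.choose m ≤ b ∧ m ≤ p ∧ (n-d) ≤ p ∧ (p < n → b < (p+1).choose m) := by
    have hp0 : m ≤ n := hmn
    have hpm : m.choose m ≤ b := by simp [Nat.choose_self]; omega
    refine ⟨Nat.findGreatest (fun p => p.choose m ≤ b) n, Nat.findGreatest_le n,
      Nat.findGreatest_spec (P := fun p => p.choose m ≤ b) hp0 hpm,
      Nat.le_findGreatest (P := fun p => p.choose m ≤ b) hp0 hpm,
      Nat.le_findGreatest (P := fun p => p.choose m ≤ b) (by omega) hfdb, fun hlt => ?_⟩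
    have := Nat.findGreatest_is_greatest (P := fun p => p.choose m ≤ b)
      (n := n) (k := Nat.findGreatest (fun p => p.choose m ≤ b) n + 1) (by omega) (by omega)
    omega
  have hie : (fun a b => instDecidableEqFin n a b : DecidableEq (Fin n)) = instDecidableEqFin n :=
    Subsingleton.elim _ _
  -- KEY1 : defect Kruskal-Katona bound
  have hKey1 : (pstar.choose l : ℝ) + C * ((b:ℝ) - pstar.choose m) ≤ (#(shadow^[m-l] F) : ℝ) := by
    rcases eq_or_lt_of_le hp2 with heq | hlt
    · have hkk := kruskal_katona_lovasz_form (n := n) (r := m) (k := pstar) (i := m - l)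
        (by omega) hp1 hp3 hFsized (by rw [hFcard]; omega)
      rw [hml] at hkk
      have hzero : (b:ℝ) - pstar.choose m = 0 := by rw [heq]; ring
      rw [hzero, mul_zero, add_zero]
      exact_mod_cast hkk
    · have hpn : pstar < n := by
        rcases eq_or_lt_of_le hp3 with rfl | h
        · omega
        · exact h
      have hb5 : b < (pstar+1).choose m := hpmax hpn
      obtain ⟨𝒞, h𝒞init, h𝒞card⟩ := exists_isInitSeg n m b hbn
      set Pfin : Finset (Fin n) := attachFin (range pstar)
        (fun mm hmm => (mem_range.1 hmm).trans_le hp3) with hPfin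
      set Pfin' : Finset (Fin n) := attachFin (range (pstar+1))
        (fun mm hmm => (mem_range.1 hmm).trans_le hpn) with hPfin'
      have hPcard : #Pfin = pstar := by rw [hPfin, card_attachFin, card_range]
      have hPcard' : #Pfin' = pstar + 1 := by rw [hPfin', card_attachFin, card_range]
      have hcubeinit : IsInitSeg (powersetCard m Pfin) m := isInitSeg_cube pstar m hp3
      have hcubeinit' : IsInitSeg (powersetCard m Pfin') m := isInitSeg_cube (pstar+1) m hpn
      have hcubecard : #(powersetCard m Pfin) = pstar.choose m := by
        rw [card_powersetCard, hPcard]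
      have hsub1 : powersetCard m Pfin ⊆ 𝒞 := by
        rcases hcubeinit.total h𝒞init with h | h
        · exact h
        · have := card_le_card h
          rw [h𝒞card, hcubecard] at this
          omega
      have hsub2 : 𝒞 ⊆ powersetCard m Pfin' := by
        rcases hcubeinit'.total h𝒞init with h | h
        · have := card_le_card h
          rw [h𝒞card, card_powersetCard, hPcard'] at this
          omega
        · exact h
      set e : Fin n := ⟨pstar, hpn⟩ with he
      have heP : e ∉ Pfin := by
        rw [hPfin, mem_attachFin, mem_range]
        simp [he]
      have hmemP' : ∀ x : Fin n, x ∈ Pfin' → x = e ∨ x ∈ Pfin := by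
        intro x hx
        rw [hPfin', mem_attachFin, mem_range] at hx
        by_cases hxe : (x:ℕ) = pstar
        · left; exact Fin.ext hxe
        · right; rw [hPfin, mem_attachFin, mem_range]; omega
      set D := 𝒞 \ powersetCard m Pfin with hD
      have hDcard : #D = b - pstar.choose m := by
        rw [hD, card_sdiff_of_subset hsub1, h𝒞card, hcubecard]
      have hDmem : ∀ S ∈ D, e ∈ S ∧ S.erase e ⊆ Pfin ∧ #S = m := by
        intro S hS
        rw [hD, mem_sdiff] at hS
        have hSm : #S = m := h𝒞init.1 hS.1
        have hSP' : S ⊆ Pfin' := (mem_powersetCard.1 (hsub2 hS.1)).1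
        have hnotP : ¬ S ⊆ Pfin := fun hc => hS.2 (mem_powersetCard.2 ⟨hc, hSm⟩)
        have heS : e ∈ S := by
          by_contra hc
          apply hnotP
          intro x hx
          rcases hmemP' x (hSP' hx) with rfl | h
          · exact absurd hx hc
          · exact h
        refine ⟨heS, ?_, hSm⟩
        intro x hx
        rw [mem_erase] at hx
        rcases hmemP' x (hSP' hx.2) with rfl | h
        · exact absurd rfl hx.1
        · exact h
      set R := D.image (fun S => S.erase e) with hR
      have hRcard : #R = #D := by
        rw [hR]
        apply card_image_of_injOn
        intro S1 h1 S2 h2 hh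
        have hh' : S1.erase e = S2.erase e := hh
        rw [← insert_erase (hDmem S1 (mem_coe.1 h1)).1,
          ← insert_erase (hDmem S2 (mem_coe.1 h2)).1, hh']
      have hRmem : ∀ T ∈ R, T ⊆ Pfin ∧ #T = m - 1 ∧ e ∉ T := by
        intro T hT
        obtain ⟨S, hS, rfl⟩ := mem_image.1 hT
        obtain ⟨h1, h2, h3⟩ := hDmem S hS
        exact ⟨h2, by rw [card_erase_of_mem h1, h3], notMem_erase e S⟩
      have hKK : #(shadow^[m-l] 𝒞) ≤ #(shadow^[m-l] F) := by
        have h := iterated_kk (k := m - l) hFsized (by rw [h𝒞card, hFcard]) h𝒞init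
        exact h
      have hpart1 : powersetCard l Pfin ⊆ shadow^[m-l] 𝒞 := by
        intro t ht
        rw [mem_powersetCard] at ht
        obtain ⟨u, htu, huP, hucard⟩ := exists_subsuperset_card_eq (n := m) ht.1
          (by rw [ht.2]; exact hlm) (by rw [hPcard]; exact hp1)
        rw [mem_shadow_iterate_iff_exists_sdiff]
        refine ⟨u, hsub1 (mem_powersetCard.2 ⟨huP, hucard⟩), htu, ?_⟩
        rw [card_sdiff_of_subset htu, hucard, ht.2]
      have hpart2 : (shadow^[m-l] R).image (insert e) ⊆ shadow^[m-l] 𝒞 := by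
        intro t ht
        obtain ⟨T, hT, rfl⟩ := mem_image.1 ht
        rw [mem_shadow_iterate_iff_exists_sdiff] at hT ⊢
        obtain ⟨R₀, hR₀, hTR, hcardd⟩ := hT
        obtain ⟨S, hSD, hSe⟩ := mem_image.1 hR₀
        obtain ⟨heS, hEP, hSm⟩ := hDmem S hSD
        have hS𝒞 : S ∈ 𝒞 := (mem_sdiff.1 hSD).1
        refine ⟨S, hS𝒞, ?_, ?_⟩
        · intro x hx
          rcases mem_insert.1 hx with rfl | h
          · exact heS
          · have : x ∈ S.erase e := by rw [hSe]; exact hTR h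
            exact mem_of_mem_erase this
        · have hEq : S \ insert e T = R₀ \ T := by
            rw [← hSe]
            ext x
            simp only [mem_sdiff, mem_erase, mem_insert, not_or]
            constructor
            · rintro ⟨hxS, hxe, hxT⟩; exact ⟨⟨hxe, hxS⟩, hxT⟩
            · rintro ⟨⟨hxe, hxS⟩, hxT⟩; exact ⟨hxS, hxe, hxT⟩
          rw [hEq, hcardd]
      have hdisj2 : Disjoint (powersetCard l Pfin) ((shadow^[m-l] R).image (insert e)) := by
        rw [disjoint_left]
        intro t ht hti
        obtain ⟨T, hT, rfl⟩ := mem_image.1 hti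
        exact heP ((mem_powersetCard.1 ht).1 (mem_insert_self e T))
      have hunion := card_le_card (union_subset hpart1 hpart2)
      rw [card_union_of_disjoint hdisj2] at hunion
      have hnotmem : ∀ T ∈ shadow^[m-l] R, e ∉ T := by
        intro T hT
        rw [mem_shadow_iterate_iff_exists_sdiff] at hT
        obtain ⟨R₀, hR₀, hsubT, _⟩ := hT
        intro hc
        exact (hRmem R₀ hR₀).2.2 (hsubT hc)
      have himgcard : #((shadow^[m-l] R).image (insert e)) = #(shadow^[m-l] R) := by
        apply card_image_of_injOn
        intro T1 h1 T2 h2 hins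
        have he1 : e ∉ T1 := hnotmem T1 h1
        have he2 : e ∉ T2 := hnotmem T2 h2
        have := congrArg (fun s => Finset.erase s e) hins
        simpa [erase_insert he1, erase_insert he2] using this
      have hRsized : (R : Set (Finset (Fin n))).Sized (m-1) := fun T hT => (hRmem T hT).2.1
      have hlym := lym_iter R (m-1) hRsized (m-l) (by omega)
      have hml2 : (m-1) - (m-l) = l - 1 := by omega
      rw [hml2] at hlym
      have hpos1 : (0:ℝ) < n.choose (m-1) := by
        exact_mod_cast Nat.choose_pos (by omega : m-1 ≤ n)
      have hpos2 : (0:ℝ) < n.choose (l-1) := by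
        exact_mod_cast Nat.choose_pos (by omega : l-1 ≤ n)
      have hsymm : n.choose (m-1) = n.choose (k+1) := by
        rw [← Nat.choose_symm (show k+1 ≤ n by omega), show n - (k+1) = m - 1 by omega]
      have hclaim : C * (n.choose (k+1) : ℝ) ≤ (n.choose (l-1) : ℝ) :=
        claimN hη hC hCN (k+1) l n (by omega) (by push_cast; push_cast at hnR; linarith)
      have hshR : C * (#R : ℝ) ≤ (#(shadow^[m-l] R) : ℝ) := by
        have h3 : (#R:ℝ) * (n.choose (l-1):ℝ) ≤ (#(shadow^[m-l] R):ℝ) * (n.choose (m-1):ℝ) := by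
          rw [div_le_div_iff₀ hpos1 hpos2] at hlym
          exact hlym
        have h4 : C * (n.choose (m-1):ℝ) ≤ (n.choose (l-1) : ℝ) := by
          have hcast : (n.choose (m-1) : ℝ) = (n.choose (k+1) : ℝ) := by exact_mod_cast hsymm
          rw [hcast]; exact hclaim
        have h5 : (C * (#R:ℝ)) * (n.choose (m-1):ℝ) ≤ (#(shadow^[m-l] R):ℝ) * (n.choose (m-1):ℝ) := by
          nlinarith [mul_le_mul_of_nonneg_left h4 (Nat.cast_nonneg (α := ℝ) (#R))]
        exact le_of_mul_le_mul_right h5 hpos1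
      have hc2 : (#R : ℝ) = (b:ℝ) - pstar.choose m := by
        rw [hRcard, hDcard, Nat.cast_sub hp2]
      have hcount : (pstar.choose l : ℝ) + (#(shadow^[m-l] R) : ℝ) ≤ (#(shadow^[m-l] 𝒞) : ℝ) := by
        have h1 : #(powersetCard l Pfin) = pstar.choose l := by rw [card_powersetCard, hPcard]
        have : pstar.choose l + #(shadow^[m-l] R) ≤ #(shadow^[m-l] 𝒞) := by omega
        exact_mod_cast this
      have hKKR : (#(shadow^[m-l] 𝒞) : ℝ) ≤ (#(shadow^[m-l] F) : ℝ) := by exact_mod_cast hKK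
      rw [← hc2]
      linarith
  -- KEY2 : telescoping
  have hKey2 : C * ((pstar.choose m : ℝ) - (fdN : ℝ)) ≤ (pstar.choose l : ℝ) - ((n-d).choose l : ℝ) := by
    have hstep : ∀ q, n-d ≤ q → q < (n-d) + (pstar - (n-d)) →
        C * (q.choose (m-1) : ℝ) ≤ (q.choose (l-1) : ℝ) := by
      intro q hq1 hq2
      by_cases hqm : q < m - 1
      · rw [Nat.choose_eq_zero_of_lt hqm]
        simp only [Nat.cast_zero, mul_zero]
        positivity
      · push_neg at hqm
        have hqn : q < n := by omega
        have haq : q = (m-1) + (q - (m-1)) := by omega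
        have hsymm2 : q.choose (m-1) = q.choose (q - (m-1)) :=
          (Nat.choose_symm hqm).symm
        have hcast : (q.choose (m-1) : ℝ) = (q.choose (q-(m-1)) : ℝ) := by exact_mod_cast hsymm2
        rw [hcast]
        apply claimN hη hC hCN (q - (m-1)) l q (by omega) ?_
        have hqR : (q:ℝ) = (n:ℝ) - k - 1 + ((q - (m-1) : ℕ) : ℝ) := by
          have hnat : q + k + 1 = n + (q - (m-1)) := by omega
          have := congrArg (fun t : ℕ => (t:ℝ)) hnat
          push_cast at this
          linarith
        push_cast
        rw [hqR]
        push_cast at hnR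
        linarith
    have := telescope hC l m (n-d) (by omega) (by omega) (pstar - (n-d)) hstep
    rw [show (n-d) + (pstar - (n-d)) = pstar by omega] at this
    exact this
  have hAshR : (A.card : ℝ) + (#(shadow^[m-l] F):ℝ) ≤ (n.choose l : ℝ) := by exact_mod_cast hsum
  linarith
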